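/- Under the hypotheses of the recovery identity (ψ pure with Bloch z-component z, 1 − z₁z ≠ 0), the probability of a successful recovery satisfies Q₀(CNOT, φ₂ ⊗ ψ) = ((1 − z²)/4) / (1 − Q₀(CNOT, φ₁ ⊗ ψ)), where φ₂ = Φ₁(CNOT, φ₁ ⊗ ψ). -/

import Mathlib

open Matrix Complex
open scoped Kronecker ComplexOrder

noncomputable def PX : Matrix (Fin 2) (Fin 2) ℂ := !![0, 1; 1, 0]
noncomputable def PY : Matrix (Fin 2) (Fin 2) ℂ := !![0, -Complex.I; Complex.I, 0]
noncomputable def PZ : Matrix (Fin 2) (Fin 2) ℂ := !![1, 0; 0, -1]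

/-- Bloch-vector parameterization of a single-qubit state. -/
noncomputable def qubit (x y z : ℝ) : Matrix (Fin 2) (Fin 2) ℂ :=
  ((1 : ℂ)/2) • ((1 : Matrix (Fin 2) (Fin 2) ℂ) + (x : ℂ) • PX + (y : ℂ) • PY + (z : ℂ) • PZ)

/-- The controlled-NOT unitary, control on the first qubit:
`CNOT |c,t⟩ = |c, c+t⟩`. -/
noncomputable def CNOT : Matrix (Fin 2 × Fin 2) (Fin 2 × Fin 2) ℂ :=
  Matrix.of fun p q => if p.1 = q.1 ∧ p.2 = q.1 + q.2 then 1 else 0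

/-- `(I ⊗ ⟨b|) M (I ⊗ |b⟩)` as a 2×2 matrix. -/
noncomputable def pick (b : Fin 2) (M : Matrix (Fin 2 × Fin 2) (Fin 2 × Fin 2) ℂ) :
    Matrix (Fin 2) (Fin 2) ℂ :=
  Matrix.of fun i j => M (i, b) (j, b)

/-- Probability of outcome `b` when measuring the second qubit of `C ρ C†`. -/
noncomputable def Q (b : Fin 2) (C ρ : Matrix (Fin 2 × Fin 2) (Fin 2 × Fin 2) ℂ) : ℂ :=
  (pick b (C * ρ * Cᴴ)).trace

/-- Normalized output of the postselected circuit `(C, b)` on `ρ`. -/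
noncomputable def Phi (b : Fin 2) (C ρ : Matrix (Fin 2 × Fin 2) (Fin 2 × Fin 2) ℂ) :
    Matrix (Fin 2) (Fin 2) ℂ :=
  (Q b C ρ)⁻¹ • pick b (C * ρ * Cᴴ)

lemma pick_conj (b : Fin 2) (ρ : Matrix (Fin 2 × Fin 2) (Fin 2 × Fin 2) ℂ) (i j : Fin 2) :
    pick b (CNOT * ρ * CNOTᴴ) i j = ρ (i, b + i) (j, b + j) := by
  simp only [pick, Matrix.mul_apply, Matrix.conjTranspose_apply, CNOT, Matrix.of_apply,
    Fintype.sum_prod_type]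
  fin_cases b <;> fin_cases i <;> fin_cases j <;> simp [Fin.sum_univ_two]

lemma Q_eq (b : Fin 2) (ρ : Matrix (Fin 2 × Fin 2) (Fin 2 × Fin 2) ℂ) :
    Q b CNOT ρ = ρ (0, b) (0, b) + ρ (1, b + 1) (1, b + 1) := by
  simp [Q, Matrix.trace, Fin.sum_univ_two, pick_conj, add_comm b 1]

lemma qubit00 (x y z : ℝ) : qubit x y z 0 0 = (1 + z) / 2 := by
  simp [qubit, PX, PY, PZ, Matrix.one_apply]; ring
lemma qubit11 (x y z : ℝ) : qubit x y z 1 1 = (1 - z) / 2 := by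
  simp [qubit, PX, PY, PZ, Matrix.one_apply]; ring

theorem recovery_probability (x₁ y₁ z₁ x y z : ℝ)
    (hφ : x₁ ^ 2 + y₁ ^ 2 + z₁ ^ 2 ≤ 1) (hψ : x ^ 2 + y ^ 2 + z ^ 2 = 1)
    (hz : 1 - z₁ * z ≠ 0) :
    Q 0 CNOT ((Phi 1 CNOT (qubit x₁ y₁ z₁ ⊗ₖ qubit x y z)) ⊗ₖ qubit x y z) =
      (((1 - z ^ 2) / 4 : ℝ) : ℂ) /
        (1 - Q 0 CNOT (qubit x₁ y₁ z₁ ⊗ₖ qubit x y z)) := by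
  have hc : (1 : ℂ) - (z₁ : ℂ) * z ≠ 0 := by
    intro h; apply hz
    have := congrArg Complex.re h
    simpa using this
  have hQ1 : Q 1 CNOT (qubit x₁ y₁ z₁ ⊗ₖ qubit x y z) = (1 - (z₁:ℂ) * z) / 2 := by
    rw [Q_eq]
    simp [Matrix.kroneckerMap_apply, qubit00, qubit11]
    ring
  have hQ0 : Q 0 CNOT (qubit x₁ y₁ z₁ ⊗ₖ qubit x y z) = (1 + (z₁:ℂ) * z) / 2 := by
    rw [Q_eq]
    simp [Matrix.kroneckerMap_apply, qubit00, qubit11]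
    ring
  rw [Phi, Matrix.smul_kronecker, Q, Matrix.mul_smul, Matrix.smul_mul]
  have hpick_smul : ∀ (c : ℂ) (M : Matrix (Fin 2 × Fin 2) (Fin 2 × Fin 2) ℂ),
      pick 0 (c • M) = c • pick 0 M := fun c M => rfl
  rw [hpick_smul, Matrix.trace_smul]
  have this1 : (pick 0 (CNOT * (pick 1 (CNOT * (qubit x₁ y₁ z₁ ⊗ₖ qubit x y z) * CNOTᴴ) ⊗ₖ qubit x y z) * CNOTᴴ)).trace
      = Q 0 CNOT (pick 1 (CNOT * (qubit x₁ y₁ z₁ ⊗ₖ qubit x y z) * CNOTᴴ) ⊗ₖ qubit x y z) := rfl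
  have hnum : Q 0 CNOT (pick 1 (CNOT * (qubit x₁ y₁ z₁ ⊗ₖ qubit x y z) * CNOTᴴ) ⊗ₖ qubit x y z)
      = (1 - (z:ℂ)^2) / 4 := by
    rw [Q_eq]
    simp only [Matrix.kroneckerMap_apply, pick_conj]
    simp [Matrix.kroneckerMap_apply, qubit00, qubit11]
    ring
  rw [this1, hnum, hQ1, hQ0, smul_eq_mul]
  have h2 : ((1:ℂ) - ↑z₁ * ↑z) / 2 ≠ 0 := by
    intro h; apply hc; linear_combination 2 * h
  push_cast
  field_simp
  have h4 : (4:ℂ) - ↑z * ↑z₁ * 4 ≠ 0 := by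
    intro h; apply hc; linear_combination h / 4
  have hinv := mul_inv_cancel₀ h4
  have h6 : (2:ℂ) - (1 + ↑z₁ * ↑z) ≠ 0 := by
    intro h; apply hc; linear_combination h
  rw [eq_div_iff h6]
  ring
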